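/- Fix u_1,…,u_n ∈ ℤ^n, q_{k+1},…,q_n ∈ ℤ^n, a ∈ ℝ^n, and p_1,…,p_k, v_1,…,v_n ∈ ℤ^n such that ∑_{j=1}^n ⟨p_l, v_j⟩⟨u_j, q_i⟩ = 0 for all l = 1,…,k and i = k+1,…,n. For i = k+1,…,n set I⁺_i = {j ∈ {1,…,n} : ⟨u_j, q_i⟩ ≥ 0}, I⁻_i = {j : ⟨u_j, q_i⟩ ≤ 0}, and define f_i : ℂ^n → ℂ by f_i(z) = ∏_{j∈I⁺_i} z_j^{⟨u_j,q_i⟩} − e^{⟨a,q_i⟩} ∏_{j∈I⁻_i} z_j^{−⟨u_j,q_i⟩} (empty products equal 1; all occurring exponents are nonnegative integers). Then for every t = (t_1,…,t_k) ∈ ℂ^k with |t_l| = 1 for all l, and every z ∈ ℂ^n, one has f_i(i_V(t)·z) = 𝒯_i(t) · f_i(z), where (i_V(t)·z)_j = (∏_{l=1}^k t_l^{⟨p_l,v_j⟩}) z_j and 𝒯_i(t) = ∏_{j∈I⁻_i} ∏_{l=1}^k t_l^{−⟨p_l,v_j⟩⟨u_j,q_i⟩}. -/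

import Mathlib

open Finset

lemma zpow_sum_aux {α : Type*} (s : Finset α) (t : ℂ) (ht : t ≠ 0) (g : α → ℤ) :
    ∏ j ∈ s, t ^ g j = t ^ (∑ j ∈ s, g j) := by
  induction s using Finset.cons_induction with
  | empty => simp
  | cons a s ha ih => rw [Finset.prod_cons, Finset.sum_cons, ih, zpow_add₀ ht]

/-- `T^k`-equivariance of the defining equations `f i` of the compactified
subtorus: `f i (i_V(t) · z) = 𝒯 i (t) * f i z` for all `t` with `|t l| = 1` and all `z`. -/
theorem stmt3 (n k : ℕ)
    (u : Fin n → Fin n → ℤ) (q : Fin (n - k) → Fin n → ℤ)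
    (a : Fin n → ℝ) (p : Fin k → Fin n → ℤ) (v : Fin n → Fin n → ℤ)
    (hsum : ∀ (l : Fin k) (i : Fin (n - k)),
      ∑ j, (∑ m, p l m * v j m) * (∑ m, u j m * q i m) = 0)
    (f : Fin (n - k) → (Fin n → ℂ) → ℂ)
    (hf : ∀ i z, f i z =
      (∏ j ∈ univ.filter fun j => 0 ≤ ∑ m, u j m * q i m,
        z j ^ (∑ m, u j m * q i m).toNat)
      - (Real.exp (∑ m, a m * (q i m : ℝ)) : ℂ) *
        ∏ j ∈ univ.filter fun j => (∑ m, u j m * q i m) ≤ 0,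
          z j ^ (-∑ m, u j m * q i m).toNat)
    (t : Fin k → ℂ) (ht : ∀ l, ‖t l‖ = 1) :
    ∀ (i : Fin (n - k)) (z : Fin n → ℂ),
      f i (fun j => (∏ l, t l ^ (∑ m, p l m * v j m)) * z j)
      = (∏ j ∈ univ.filter fun j => (∑ m, u j m * q i m) ≤ 0,
          ∏ l, t l ^ (-(∑ m, p l m * v j m) * (∑ m, u j m * q i m)))
        * f i z := by
  intro i z
  have htne : ∀ l, t l ≠ 0 := by
    intro l h
    have := ht l
    rw [h] at this
    simp at this
  set b : Fin n → ℤ := fun j => ∑ m, u j m * q i m with hb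
  set A : Fin k → Fin n → ℤ := fun l j => ∑ m, p l m * v j m with hA
  set c : Fin n → ℂ := fun j => ∏ l, t l ^ (A l j) with hc
  -- exponent identity
  have hexp : ∀ l : Fin k,
      ∑ j ∈ univ.filter (fun j => 0 ≤ b j), A l j * b j
      = ∑ j ∈ univ.filter (fun j => b j ≤ 0), (-(A l j) * b j) := by
    intro l
    have h1 : ∑ j ∈ univ.filter (fun j => 0 ≤ b j), A l j * b j
        + ∑ j ∈ univ.filter (fun j => ¬ 0 ≤ b j), A l j * b j = 0 := by
      rw [Finset.sum_filter_add_sum_filter_not]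
      exact hsum l i
    have h2 : ∑ j ∈ univ.filter (fun j => b j ≤ 0), A l j * b j
        = ∑ j ∈ univ.filter (fun j => ¬ 0 ≤ b j), A l j * b j := by
      refine (Finset.sum_subset ?_ ?_).symm
      · intro j hj
        simp only [mem_filter, mem_univ, true_and] at *
        exact le_of_not_ge hj
      · intro j hj hj2
        simp only [mem_filter, mem_univ, true_and, not_not] at *
        rw [le_antisymm hj hj2, mul_zero]
    simp only [neg_mul, Finset.sum_neg_distrib]
    rw [h2]
    omega
  -- the torus factor
  set T : ℂ := ∏ j ∈ univ.filter (fun j => b j ≤ 0), ∏ l, t l ^ (-(A l j) * b j) with hT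
  have hTl : T = ∏ l, t l ^ (∑ j ∈ univ.filter (fun j => b j ≤ 0), (-(A l j) * b j)) := by
    rw [hT, Finset.prod_comm]
    exact Finset.prod_congr rfl fun l _ => zpow_sum_aux _ _ (htne l) _
  -- positive part
  have hpos : ∏ j ∈ univ.filter (fun j => 0 ≤ b j), (c j) ^ (b j).toNat = T := by
    have : ∀ j ∈ univ.filter (fun j => 0 ≤ b j),
        (c j) ^ (b j).toNat = ∏ l, t l ^ (A l j * b j) := by
      intro j hj
      simp only [mem_filter, mem_univ, true_and] at hj
      rw [hc]
      rw [← Finset.prod_pow]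
      refine Finset.prod_congr rfl fun l _ => ?_
      rw [← zpow_natCast (t l ^ (A l j)), ← zpow_mul, Int.toNat_of_nonneg hj]
    rw [Finset.prod_congr rfl this, Finset.prod_comm, hTl]
    refine Finset.prod_congr rfl fun l _ => ?_
    rw [zpow_sum_aux _ _ (htne l), hexp l]
  -- negative part
  have hneg : ∏ j ∈ univ.filter (fun j => b j ≤ 0), (c j) ^ (-(b j)).toNat = T := by
    rw [hT]
    refine Finset.prod_congr rfl fun j hj => ?_
    simp only [mem_filter, mem_univ, true_and] at hj
    rw [hc, ← Finset.prod_pow]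
    refine Finset.prod_congr rfl fun l _ => ?_
    rw [← zpow_natCast (t l ^ (A l j)), ← zpow_mul, Int.toNat_of_nonneg (by omega : (0:ℤ) ≤ -b j)]
    ring_nf
  rw [hf i, hf i]
  simp only [mul_pow, Finset.prod_mul_distrib]
  rw [hpos, hneg]
  ring
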